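/- Let M be a countably infinite set and let (P_k)_{k∈ℕ} be an independent family of subsets of M, meaning that for all disjoint finite sets K, L ⊆ ℕ, the set ⋂_{k∈K} P_k ∩ ⋂_{l∈L} (M \ P_l) is nonempty. Fix n ∈ ℕ and for each F ⊆ {0,…,n−1} let A_F = ⋂_{k∈F} P_k ∩ ⋂_{l∈{0,…,n−1}\F} (M \ P_l). Then there exists a bijection h : M → M such that h[A_F] = A_F for every F ⊆ {0,…,n−1}, and for every x ∈ M, x ∈ P_n if and only if h(x) ∉ P_n. -/

import Mathlib

universe u

theorem stmt_14 (M : Type u) [Countable M] [Infinite M]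
    (P : ℕ → Set M)
    -- (P_k) is an independent family
    (hindep : ∀ K L : Finset ℕ, Disjoint K L →
      ((⋂ k ∈ K, P k) ∩ ⋂ l ∈ L, (P l)ᶜ).Nonempty)
    (n : ℕ) :
    ∃ h : M → M, Function.Bijective h ∧
      (∀ F : Finset ℕ, F ⊆ Finset.range n →
        h '' ((⋂ k ∈ F, P k) ∩ ⋂ l ∈ Finset.range n \ F, (P l)ᶜ) =
          (⋂ k ∈ F, P k) ∩ ⋂ l ∈ Finset.range n \ F, (P l)ᶜ) ∧
      (∀ x : M, x ∈ P n ↔ h x ∉ P n) := by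
  classical
  set f : M → Finset ℕ × Bool :=
    fun x => ((Finset.range n).filter (fun k => x ∈ P k), decide (x ∈ P n)) with hfdef
  -- membership characterization of atoms
  have hmem : ∀ (F : Finset ℕ), F ⊆ Finset.range n → ∀ x : M,
      (x ∈ (⋂ k ∈ F, P k) ∩ ⋂ l ∈ Finset.range n \ F, (P l)ᶜ) ↔ (f x).1 = F := by
    intro F hF x
    simp only [Set.mem_inter_iff, Set.mem_iInter, Set.mem_compl_iff, Finset.mem_sdiff]
    constructor
    · rintro ⟨h1, h2⟩
      ext k
      simp only [hfdef, Finset.mem_filter, Finset.mem_range]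
      constructor
      · rintro ⟨hk, hxk⟩
        by_contra hkF
        exact h2 k ⟨Finset.mem_range.mpr hk, hkF⟩ hxk
      · intro hkF
        exact ⟨Finset.mem_range.mp (hF hkF), h1 k hkF⟩
    · intro hfx
      constructor
      · intro k hk
        have : k ∈ (Finset.range n).filter (fun k => x ∈ P k) := by
          rw [show (Finset.range n).filter (fun k => x ∈ P k) = F from hfx]; exact hk
        exact (Finset.mem_filter.mp this).2
      · rintro l ⟨hl1, hl2⟩ hxl
        apply hl2
        rw [← show (Finset.range n).filter (fun k => x ∈ P k) = F from hfx]
        exact Finset.mem_filter.mpr ⟨hl1, hxl⟩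
  -- each fiber over an admissible index is infinite
  have hinf : ∀ t : Finset ℕ × Bool, t.1 ⊆ Finset.range n → Infinite {x // f x = t} := by
    intro t ht
    have key : ∀ m : ℕ, ∃ x : M, f x = t ∧ x ∈ P (n + 1 + m) ∧
        ∀ j, n < j → j < n + 1 + m → x ∉ P j := by
      intro m
      set K : Finset ℕ := t.1 ∪ (if t.2 then {n} else ∅) ∪ {n + 1 + m} with hK
      set L : Finset ℕ := (Finset.range (n + 1) \ K) ∪ Finset.Ico (n + 1) (n + 1 + m) with hL
      have hKmem : ∀ k, k ∈ K ↔ (k ∈ t.1 ∨ (t.2 = true ∧ k = n) ∨ k = n + 1 + m) := by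
        intro k
        simp only [hK, Finset.mem_union, Finset.mem_singleton]
        cases t.2 <;> simp <;> tauto
      have hdisj : Disjoint K L := by
        rw [Finset.disjoint_left]
        intro k hk
        simp only [hL, Finset.mem_union, Finset.mem_sdiff, Finset.mem_Ico]
        push_neg
        refine ⟨fun _ => hk, ?_⟩
        intro hk1
        rcases (hKmem k).mp hk with h | h | h
        · exact absurd (Finset.mem_range.mp (ht h)) (by omega)
        · omega
        · omega
      obtain ⟨x, hx1, hx2⟩ := hindep K L hdisj
      simp only [Set.mem_iInter] at hx1 hx2
      have hxK : ∀ k ∈ K, x ∈ P k := hx1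
      have hxL : ∀ l ∈ L, x ∉ P l := hx2
      have hnotn : ∀ k ∈ t.1, k < n := fun k hk => Finset.mem_range.mp (ht hk)
      refine ⟨x, ?_, ?_, ?_⟩
      · have hfst : (Finset.range n).filter (fun k => x ∈ P k) = t.1 := by
          ext k
          simp only [Finset.mem_filter, Finset.mem_range]
          constructor
          · rintro ⟨hk, hxk⟩
            by_contra hkt
            have : k ∈ L := by
              simp only [hL, Finset.mem_union, Finset.mem_sdiff, Finset.mem_range]
              left
              refine ⟨by omega, fun hkK => ?_⟩
              rcases (hKmem k).mp hkK with h | h | h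
              · exact hkt h
              · omega
              · omega
            exact hxL k this hxk
          · intro hkt
            exact ⟨hnotn k hkt, hxK k ((hKmem k).mpr (Or.inl hkt))⟩
        have hsnd : decide (x ∈ P n) = t.2 := by
          cases ht2 : t.2 with
          | true =>
            simp only [decide_eq_true_eq]
            exact hxK n ((hKmem n).mpr (Or.inr (Or.inl ⟨ht2, rfl⟩)))
          | false =>
            simp only [decide_eq_false_iff_not]
            apply hxL n
            simp only [hL, Finset.mem_union, Finset.mem_sdiff, Finset.mem_range]
            left
            refine ⟨by omega, fun hnK => ?_⟩
            rcases (hKmem n).mp hnK with h | h | h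
            · exact absurd (hnotn n h) (by omega)
            · rw [ht2] at h; exact absurd h.1 (by simp)
            · omega
        simp only [hfdef]
        exact Prod.ext hfst hsnd
      · exact hxK _ ((hKmem _).mpr (Or.inr (Or.inr rfl)))
      · intro j hj1 hj2
        apply hxL j
        simp only [hL, Finset.mem_union, Finset.mem_Ico]
        right
        omega
    choose xm hxm1 hxm2 hxm3 using key
    have hinj : Function.Injective (fun m => (⟨xm m, hxm1 m⟩ : {x // f x = t})) := by
      intro a b hab
      simp only [Subtype.mk.injEq] at hab
      by_contra hne
      rcases Nat.lt_or_ge a b with h | h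
      · exact hxm3 b (n + 1 + a) (by omega) (by omega) (hab ▸ hxm2 a)
      · have h' : b < a := by omega
        exact hxm3 a (n + 1 + b) (by omega) (by omega) (hab ▸ hxm2 b)
    exact Infinite.of_injective _ hinj
  -- fibers over t and over (t.1, !t.2) are equinumerous
  have hne : ∀ t : Finset ℕ × Bool,
      Nonempty ({x // f x = t} ≃ {x // f x = (t.1, !t.2)}) := by
    intro t
    by_cases ht : t.1 ⊆ Finset.range n
    · have h1 := hinf t ht
      have h2 := hinf (t.1, !t.2) ht
      obtain ⟨d1⟩ := nonempty_denumerable {x // f x = t}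
      obtain ⟨d2⟩ := nonempty_denumerable {x // f x = (t.1, !t.2)}
      exact ⟨(@Denumerable.eqv _ d1).trans (@Denumerable.eqv _ d2).symm⟩
    · have e1 : IsEmpty {x // f x = t} :=
        ⟨fun ⟨x, hx⟩ => ht (by rw [← hx]; exact Finset.filter_subset _ _)⟩
      have e2 : IsEmpty {x // f x = (t.1, !t.2)} :=
        ⟨fun ⟨x, hx⟩ => ht (by
          have : (f x).1 = t.1 := by rw [hx]
          rw [← this]; exact Finset.filter_subset _ _)⟩
      exact ⟨Equiv.equivOfIsEmpty _ _⟩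
  set g : M → Finset ℕ × Bool := fun x => ((f x).1, !(f x).2) with hgdef
  have E : ∀ t : Finset ℕ × Bool, {x // f x = t} ≃ {x // g x = t} := by
    intro t
    refine (Classical.choice (hne t)).trans (Equiv.subtypeEquivRight ?_)
    intro x
    simp only [hgdef, Prod.ext_iff]
    constructor
    · rintro ⟨h1, h2⟩
      exact ⟨h1, by rw [h2, Bool.not_not]⟩
    · rintro ⟨h1, h2⟩
      exact ⟨h1, by rw [← h2, Bool.not_not]⟩
  set h : M ≃ M := Equiv.ofFiberEquiv E with hhdef
  have hkey : ∀ x : M, g (h x) = f x := fun x => Equiv.ofFiberEquiv_map E x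
  have hfst : ∀ x : M, (f (h x)).1 = (f x).1 := by
    intro x
    have := hkey x
    simp only [hgdef, Prod.ext_iff] at this
    exact this.1
  have hsnd : ∀ x : M, (f (h x)).2 = !(f x).2 := by
    intro x
    have := hkey x
    simp only [hgdef, Prod.ext_iff] at this
    simp only [hfdef]
    have h2 := this.2
    simp only [hfdef] at h2
    rw [← h2, Bool.not_not]
  refine ⟨h, h.bijective, ?_, ?_⟩
  · intro F hF
    ext y
    constructor
    · rintro ⟨x, hx, rfl⟩
      exact (hmem F hF (h x)).mpr (by rw [hfst x]; exact (hmem F hF x).mp hx)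
    · intro hy
      refine ⟨h.symm y, ?_, h.apply_symm_apply y⟩
      apply (hmem F hF _).mpr
      have := hfst (h.symm y)
      rw [h.apply_symm_apply] at this
      rw [← this]
      exact (hmem F hF y).mp hy
  · intro x
    have h2 := hsnd x
    have hb : ∀ y : M, y ∈ P n ↔ (f y).2 = true := fun y => by simp [hfdef]
    rw [hb x, hb (h x), h2]
    cases (f x).2 <;> simp
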